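/- In an abelian Polish group, the collection of Haar meager sets forms a σ-ideal: it contains the empty set, is closed under taking subsets, and is closed under countable unions. -/

import Mathlib

open Set

open Topology Filter TopologicalSpace Pointwise

section Aux

open Set Topology Filter TopologicalSpace

lemma IsMeagre.union2 {α : Type*} [TopologicalSpace α] {s t : Set α}
    (hs : IsMeagre s) (ht : IsMeagre t) : IsMeagre (s ∪ t) := by
  rw [IsMeagre, compl_union]; exact Filter.inter_mem hs ht

section KU

variable {A Y : Type*} [TopologicalSpace A] [TopologicalSpace Y]

/-- Half of Kuratowski–Ulam: if `F` is closed nowhere dense in `A × Y` with `A`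
second countable, then for comeagerly many `y`, the section is nowhere dense. -/
lemma residual_sections_nwd [SecondCountableTopology A] {F : Set (A × Y)}
    (hFc : IsClosed F) (hF : IsNowhereDense F) :
    {y | IsNowhereDense ((fun a => (a, y)) ⁻¹' F)} ∈ residual Y := by
  have hbasis := isBasis_countableBasis A
  set b := countableBasis A with hb
  -- the open dense complement
  have hWo : IsOpen Fᶜ := hFc.isOpen_compl
  have hWd : Dense Fᶜ := by
    rw [hFc.isNowhereDense_iff] at hF
    rwa [← interior_eq_empty_iff_dense_compl]
  -- for each nonempty basic open V, the set of y whose section meets V in the complement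
  have key : ∀ V ∈ b, V.Nonempty → {y | ∃ a ∈ V, (a, y) ∈ Fᶜ} ∈ residual Y := by
    intro V hV hVne
    apply residual_of_dense_open
    · have : {y | ∃ a ∈ V, (a, y) ∈ Fᶜ} = Prod.snd '' (Fᶜ ∩ V ×ˢ univ) := by
        ext y
        simp only [mem_setOf_eq, mem_image, mem_inter_iff, mem_prod, mem_univ, and_true,
          Prod.exists]
        constructor
        · rintro ⟨a, haV, haF⟩; exact ⟨a, y, ⟨haF, haV⟩, rfl⟩
        · rintro ⟨a, y', ⟨hF', hV'⟩, rfl⟩; exact ⟨a, hV', hF'⟩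
      rw [this]
      exact isOpenMap_snd _ (hWo.inter ((hbasis.isOpen hV).prod isOpen_univ))
    · rw [dense_iff_inter_open]
      rintro O hO ⟨y₀, hy₀⟩
      obtain ⟨⟨a, y⟩, haF, ha, hy⟩ : (Fᶜ ∩ V ×ˢ O).Nonempty := by
        rcases hWd.inter_open_nonempty (V ×ˢ O) ((hbasis.isOpen hV).prod hO)
          (by exact ⟨(hVne.choose, y₀), hVne.choose_spec, hy₀⟩) with ⟨p, hp1, hp2⟩
        exact ⟨p, hp2, hp1.1, hp1.2⟩
      exact ⟨y, hy, ⟨a, ha, haF⟩⟩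
  -- intersect over countably many basic sets
  have hcnt : {V : Set A | V ∈ b ∧ V.Nonempty}.Countable :=
    (countable_countableBasis A).mono (fun V hV => hV.1)
  have hres : ⋂ V ∈ {V : Set A | V ∈ b ∧ V.Nonempty}, {y | ∃ a ∈ V, (a, y) ∈ Fᶜ}
      ∈ residual Y := by
    exact (countable_bInter_mem hcnt).2 fun V hV => key V hV.1 hV.2
  refine Filter.mem_of_superset hres ?_
  intro y hy
  simp only [mem_iInter, mem_setOf_eq] at hy
  have hsec_closed : IsClosed ((fun a => (a, y)) ⁻¹' F) :=
    hFc.preimage (Continuous.prodMk_left y)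
  rw [mem_setOf_eq, hsec_closed.isNowhereDense_iff, ← compl_compl
    ((fun a => (a, y)) ⁻¹' F), interior_compl]
  rw [compl_empty_iff, ← dense_iff_closure_eq]
  rw [hbasis.dense_iff]
  intro V hV hVne
  obtain ⟨a, haV, haF⟩ := hy V ⟨hV, hVne⟩
  exact ⟨a, haV, haF⟩


lemma residual_sections_meagre [SecondCountableTopology A] {M : Set (A × Y)}
    (hM : IsMeagre M) : {y | IsMeagre ((fun a => (a, y)) ⁻¹' M)} ∈ residual Y := by
  rw [isMeagre_iff_countable_union_isNowhereDense] at hM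
  obtain ⟨S, hnwd, hScnt, hMsub⟩ := hM
  have key : ⋂ s ∈ S, {y | IsNowhereDense ((fun a => (a, y)) ⁻¹' closure s)}
      ∈ residual Y := by
    refine (countable_bInter_mem hScnt).2 fun s hs => ?_
    exact residual_sections_nwd isClosed_closure (hnwd s hs).closure
  refine Filter.mem_of_superset key ?_
  intro y hy
  simp only [mem_iInter, mem_setOf_eq] at hy ⊢
  rw [isMeagre_iff_countable_union_isNowhereDense]
  refine ⟨(fun s => (fun a => (a, y)) ⁻¹' closure s) '' S, ?_, hScnt.image _, ?_⟩
  · rintro t ⟨s, hs, rfl⟩; exact hy s hs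
  · intro a ha
    obtain ⟨s, hs, has⟩ := by simpa using hMsub ha
    simp only [sUnion_image, mem_iUnion]
    exact ⟨s, hs, subset_closure has⟩

/-- The Kuratowski–Ulam direction we need: a Baire measurable set in a product,
all of whose vertical sections are meager, is itself meager. -/
lemma isMeagre_of_sections_meagre [SecondCountableTopology A] [BaireSpace A]
    [BaireSpace Y] {S : Set (A × Y)} (hS : BaireMeasurableSet S)
    (h : ∀ y, IsMeagre ((fun a => (a, y)) ⁻¹' S)) : IsMeagre S := by
  obtain ⟨U, hUo, hSU⟩ := hS.residualEq_isOpen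
  have hM : IsMeagre (S \ U ∪ U \ S) := by
    have : (S \ U ∪ U \ S)ᶜ ∈ residual (A × Y) := by
      refine Filter.mem_of_superset hSU ?_
      intro p hp
      simp only [Set.mem_compl_iff, Set.mem_union, Set.mem_diff] at *
      have : p ∈ S ↔ p ∈ U := by exact Iff.of_eq hp
      tauto
    exact this
  rcases eq_empty_or_nonempty U with hU | hU
  · refine IsMeagre.mono (show S ⊆ S \ U ∪ U \ S by
      intro p hp; simp [hU] at *; tauto) ?_
    exact hM
  · exfalso
    obtain ⟨⟨a₀, y₀⟩, hp⟩ := hU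
    obtain ⟨V, O, hVo, hOo, haV, hyO, hVO⟩ := isOpen_prod_iff.1 hUo a₀ y₀ hp
    -- find y ∈ O with meager section of the symmetric difference
    have hres := residual_sections_meagre (A := A) (Y := Y) hM
    have hdense : Dense {y | IsMeagre ((fun a => (a, y)) ⁻¹' (S \ U ∪ U \ S))} :=
      dense_of_mem_residual hres
    obtain ⟨y, hyO', hy⟩ := hdense.inter_open_nonempty O hOo ⟨y₀, hyO⟩
    -- the section of U at y contains V, but is meager
    have hVsub : V ⊆ (fun a => (a, y)) ⁻¹' S ∪ (fun a => (a, y)) ⁻¹' (S \ U ∪ U \ S) := by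
      intro a ha
      by_cases haS : (a, y) ∈ S
      · exact Or.inl haS
      · exact Or.inr (Or.inr ⟨hVO ⟨ha, hyO'⟩, haS⟩)
    have hVmeagre : IsMeagre V := IsMeagre.mono hVsub (IsMeagre.union2 (h y) hy)
    have : Dense Vᶜ := dense_of_mem_residual hVmeagre
    obtain ⟨a, ha1, ha2⟩ := this.inter_open_nonempty V hVo ⟨a₀, haV⟩
    exact ha2 ha1

end KU
open Set Topology Filter TopologicalSpace

section Restrict

variable {K : Type*} [TopologicalSpace K]

lemma isNowhereDense_preimage_val {V N : Set K} (hV : IsOpen V) (hN : IsClosed N)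
    (hNnwd : IsNowhereDense N) :
    IsNowhereDense ((Subtype.val : closure V → K) ⁻¹' N) := by
  have hclosed : IsClosed ((Subtype.val : closure V → K) ⁻¹' N) :=
    hN.preimage continuous_subtype_val
  rw [hclosed.isNowhereDense_iff, eq_empty_iff_forall_notMem]
  rintro z hz
  obtain ⟨W, hWo, hWeq⟩ := isOpen_induced_iff.mp
    (isOpen_interior (s := (Subtype.val : closure V → K) ⁻¹' N))
  have hzW : z.1 ∈ W := by rw [← hWeq] at hz; exact hz
  have hWV : (W ∩ V).Nonempty := by
    have := z.2
    rw [mem_closure_iff] at this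
    exact this W hWo hzW
  have hsub : W ∩ V ⊆ N := by
    rintro b ⟨hbW, hbV⟩
    have hb : (⟨b, subset_closure hbV⟩ : closure V) ∈ interior
        ((Subtype.val : closure V → K) ⁻¹' N) := by rw [← hWeq]; exact hbW
    exact show (⟨b, subset_closure hbV⟩ : closure V) ∈ ((Subtype.val : closure V → K) ⁻¹' N) from interior_subset hb
  have : (W ∩ V) ⊆ interior (closure N) := by
    apply subset_interior_iff.mpr
    exact ⟨W ∩ V, hWo.inter hV, subset_rfl, hsub.trans subset_closure⟩
  rw [hNnwd] at this
  exact (hWV.mono this).ne_empty rfl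

lemma isMeagre_preimage_val {V M : Set K} (hV : IsOpen V) (hM : IsMeagre M) :
    IsMeagre ((Subtype.val : closure V → K) ⁻¹' M) := by
  rw [isMeagre_iff_countable_union_isNowhereDense] at hM ⊢
  obtain ⟨S, hnwd, hcnt, hsub⟩ := hM
  refine ⟨(fun s => (Subtype.val : closure V → K) ⁻¹' closure s) '' S, ?_,
    hcnt.image _, ?_⟩
  · rintro t ⟨s, hs, rfl⟩
    exact isNowhereDense_preimage_val hV isClosed_closure (hnwd s hs).closure
  · intro z hz
    obtain ⟨s, hs, h⟩ := by simpa using hsub hz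
    simp only [sUnion_image, mem_iUnion]
    exact ⟨s, hs, subset_closure h⟩

end Restrict

section Shrink

variable {X : Type*} [AddCommGroup X] [TopologicalSpace X] [IsTopologicalAddGroup X]

/-- Witness shrinking: every Haar-meager witness can be replaced by one whose image
lies in a prescribed neighborhood of `0`. -/
lemma shrink_witness {B : Set X}
    (hB : ∃ (K : Type) (_ : MetricSpace K) (_ : CompactSpace K) (_ : Nonempty K)
      (f : K → X), Continuous f ∧ ∀ x : X, IsMeagre (f ⁻¹' {y | y - x ∈ B}))
    {U : Set X} (hU : U ∈ nhds (0 : X)) :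
    ∃ (K : Type) (_ : MetricSpace K) (_ : CompactSpace K) (_ : Nonempty K)
      (f : K → X), Continuous f ∧ (∀ k, f k ∈ U) ∧
        ∀ x : X, IsMeagre (f ⁻¹' {y | y - x ∈ B}) := by
  obtain ⟨K, mK, cK, nK, f, hf, hmeag⟩ := hB
  set k₀ := Classical.arbitrary K with hk₀
  have hcont : Continuous (fun k => f k - f k₀) := hf.sub continuous_const
  have hpre : (fun k => f k - f k₀) ⁻¹' U ∈ nhds k₀ :=
    hcont.continuousAt.preimage_mem_nhds (by simpa using hU)
  obtain ⟨ε, hε, hball⟩ := Metric.mem_nhds_iff.mp hpre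
  set V := Metric.ball k₀ (ε / 2) with hV
  refine ⟨↥(closure V), inferInstance, ?_, ?_, fun k => f k.1 - f k₀,
    (hcont.comp continuous_subtype_val), ?_, ?_⟩
  · exact isCompact_iff_compactSpace.mp isClosed_closure.isCompact
  · exact ⟨⟨k₀, subset_closure (Metric.mem_ball_self (by positivity))⟩⟩
  · intro k
    have : k.1 ∈ Metric.ball k₀ ε :=
      (Metric.closedBall_subset_ball (by linarith))
        (Metric.closure_ball_subset_closedBall k.2)
    exact hball this
  · intro x
    have heq : (fun k : closure V => f k.1 - f k₀) ⁻¹' {y | y - x ∈ B} =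
        (Subtype.val : closure V → K) ⁻¹' (f ⁻¹' {y | y - (x + f k₀) ∈ B}) := by
      ext k
      simp only [mem_preimage, mem_setOf_eq]
      have : f (k : K) - f k₀ - x = f (k : K) - (x + f k₀) := by abel
      rw [this]
    rw [heq]
    exact isMeagre_preimage_val Metric.isOpen_ball (hmeag (x + f k₀))

end Shrink
open Set Topology Filter TopologicalSpace Pointwise

/-- Packed compact-metric test data for a Haar-meager witness. -/
structure HMPack (X : Type*) where
  K : Type
  ms : MetricSpace K
  g : K → X

/-- The range of the test function. -/
def HMPack.rng {X : Type*} (w : HMPack X) : Set X := Set.range w.g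

/-- The test data is a genuine witness for `B`, with image inside `T`. -/
def HMPack.Good {X : Type*} [AddCommGroup X] [TopologicalSpace X]
    (B T : Set X) (w : HMPack X) : Prop :=
  letI := w.ms
  CompactSpace w.K ∧ Nonempty w.K ∧ Continuous w.g ∧ (∀ k, w.g k ∈ T) ∧
    ∀ x : X, IsMeagre (w.g ⁻¹' {y | y - x ∈ B})

lemma HMPack.Good.rng_compact {X : Type*} [AddCommGroup X] [TopologicalSpace X]
    {B T : Set X} {w : HMPack X} (h : w.Good B T) : IsCompact w.rng := by
  letI := w.ms
  haveI := h.1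
  exact isCompact_range h.2.2.1

lemma HMPack.Good.rng_subset {X : Type*} [AddCommGroup X] [TopologicalSpace X]
    {B T : Set X} {w : HMPack X} (h : w.Good B T) : w.rng ⊆ T := by
  letI := w.ms
  rw [HMPack.rng, Set.range_subset_iff]
  exact h.2.2.2.1

/-- State of the recursive construction of shrunken witnesses. -/
structure HMSt (X : Type*) where
  P : Set X
  T : Set X
  w : HMPack X

/-- Invariants of a single state. -/
def HMSt.Good {X : Type*} [AddCommGroup X] [MetricSpace X] (B : Set X) (ε : ℝ)
    (s : HMSt X) : Prop :=
  IsCompact s.P ∧ s.T ∈ 𝓝 (0 : X) ∧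
    (∀ p ∈ s.P, ∀ t ∈ s.T + s.T, dist (p + t) p < ε) ∧ s.w.Good B s.T

lemma HMSt.Good.P_add_rng_compact {X : Type*} [AddCommGroup X] [MetricSpace X]
    [IsTopologicalAddGroup X] {B : Set X} {ε : ℝ} {s : HMSt X} (h : s.Good B ε) :
    IsCompact (s.P + s.w.rng) :=
  h.1.add h.2.2.2.rng_compact

lemma HMSt.Good.T_mem {X : Type*} [AddCommGroup X] [MetricSpace X]
    {B : Set X} {ε : ℝ} {s : HMSt X} (h : s.Good B ε) : s.T ∈ 𝓝 (0 : X) := h.2.1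

/-- The key step: given any compact `P`, a neighborhood `Tp` of `0` and `ε > 0`,
there is a state with the given `P`, `T + T ⊆ Tp`, satisfying all invariants. -/
lemma exists_HMSt {X : Type*} [AddCommGroup X] [MetricSpace X] [IsTopologicalAddGroup X]
    {B : Set X}
    (hB : ∃ (K : Type) (_ : MetricSpace K) (_ : CompactSpace K) (_ : Nonempty K)
      (f : K → X), Continuous f ∧ ∀ x : X, IsMeagre (f ⁻¹' {y | y - x ∈ B}))
    (P : Set X) (hP : IsCompact P) {Tp : Set X} (hTp : Tp ∈ 𝓝 (0 : X)) {ε : ℝ}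
    (hε : 0 < ε) :
    ∃ s : HMSt X, s.P = P ∧ (s.T + s.T ⊆ Tp) ∧ s.Good B ε := by
  have hφ : Continuous (fun q : X × X => dist (q.1 + q.2) q.1) := by
    apply Continuous.dist
    · exact continuous_fst.add continuous_snd
    · exact continuous_fst
  have hopen : IsOpen {q : X × X | dist (q.1 + q.2) q.1 < ε} :=
    isOpen_lt hφ continuous_const
  have hsub : P ×ˢ ({0} : Set X) ⊆ {q : X × X | dist (q.1 + q.2) q.1 < ε} := by
    rintro ⟨p, t⟩ ⟨hp, ht⟩
    simp only [mem_singleton_iff] at ht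
    subst ht
    simpa using hε
  obtain ⟨u, v, hu, hv, hPu, h0v, huv⟩ :=
    generalized_tube_lemma hP isCompact_singleton hopen hsub
  have hv0 : v ∈ 𝓝 (0 : X) := hv.mem_nhds (h0v rfl)
  obtain ⟨T, hT0, hTadd⟩ := exists_nhds_zero_half (inter_mem hv0 hTp)
  obtain ⟨K, mK, cK, nK, g, hg, hsmall, hmeag⟩ := shrink_witness hB hT0
  refine ⟨⟨P, T, ⟨K, mK, g⟩⟩, rfl, ?_, hP, hT0, ?_, cK, nK, hg, hsmall, hmeag⟩
  · rintro t ⟨t1, ht1, t2, ht2, rfl⟩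
    exact (hTadd t1 ht1 t2 ht2).2
  · rintro p hp t ⟨t1, ht1, t2, ht2, rfl⟩
    have htv : t1 + t2 ∈ v := (hTadd t1 ht1 t2 ht2).1
    exact huv (show (p, t1 + t2) ∈ u ×ˢ v from ⟨hPu hp, htv⟩)

end Aux

/-- `A` is *Haar meager* in an abelian (Polish) group `X` if there are a Borel set
`B ⊇ A`, a (nonempty) compact metric space `K` and a continuous `f : K → X` such that
`f ⁻¹ (B + x)` is meager in `K` for every `x ∈ X`.  Here `B + x = {y | y - x ∈ B}`. -/
def IsHaarMeager {X : Type*} [AddCommGroup X] [TopologicalSpace X]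
    [MeasurableSpace X] (A : Set X) : Prop :=
  ∃ B : Set X, A ⊆ B ∧ MeasurableSet B ∧
    ∃ (K : Type) (_ : MetricSpace K) (_ : CompactSpace K) (_ : Nonempty K)
      (f : K → X), Continuous f ∧ ∀ x : X, IsMeagre (f ⁻¹' {y | y - x ∈ B})

/-- In an abelian Polish group the Haar meager sets form a σ-ideal: the empty set is
Haar meager, subsets of Haar meager sets are Haar meager, and countable unions of
Haar meager sets are Haar meager. -/
theorem isHaarMeager_sigmaIdeal {X : Type*} [AddCommGroup X] [TopologicalSpace X]
    [IsTopologicalAddGroup X] [PolishSpace X] [MeasurableSpace X] [BorelSpace X] :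
    IsHaarMeager (∅ : Set X) ∧
    (∀ A B : Set X, A ⊆ B → IsHaarMeager B → IsHaarMeager A) ∧
    (∀ A : ℕ → Set X, (∀ n, IsHaarMeager (A n)) → IsHaarMeager (⋃ n, A n)) := by

  refine ⟨?_, ?_, ?_⟩
  · -- empty set
    refine ⟨∅, subset_rfl, MeasurableSet.empty, ↥({0} : Set ℝ), inferInstance,
      isCompact_iff_compactSpace.mp isCompact_singleton, ⟨⟨0, rfl⟩⟩,
      fun _ => 0, continuous_const, fun x => ?_⟩
    have hpre : ((fun _ => 0 : ↥({0} : Set ℝ) → X)) ⁻¹' {y | y - x ∈ (∅ : Set X)} = ∅ := by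
      ext k; simp
    rw [hpre]
    exact IsMeagre.empty
  · -- monotonicity
    rintro A B hAB ⟨C, hBC, hC, wit⟩
    exact ⟨C, hAB.trans hBC, hC, wit⟩
  · -- countable unions
    intro A hA
    choose B hsub hBor hwit using hA
    letI := upgradeIsCompletelyMetrizable X
    have hex : ∀ (n : ℕ) (P : Set X), IsCompact P → ∀ Tp ∈ 𝓝 (0 : X),
        ∃ s : HMSt X, s.P = P ∧ (s.T + s.T ⊆ Tp) ∧ s.Good (B n) ((1/2 : ℝ)^n) :=
      fun n P hP Tp hTp => exists_HMSt (hwit n) P hP hTp (by positivity)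
    -- construct the sequence of states
    obtain ⟨st, hgood, hP0, hlinkP, hlinkT⟩ :
        ∃ st : ℕ → HMSt X, (∀ n, (st n).Good (B n) ((1/2 : ℝ)^n)) ∧
          (st 0).P = {0} ∧ (∀ n, (st (n+1)).P = (st n).P + (st n).w.rng) ∧
          (∀ n, (st (n+1)).T + (st (n+1)).T ⊆ (st n).T) := by
      let F : ∀ _n : ℕ, {s : HMSt X // s.Good (B _n) ((1/2 : ℝ)^_n)} := fun n =>
        Nat.rec
          ⟨(hex 0 {0} isCompact_singleton univ univ_mem).choose,
            (hex 0 {0} isCompact_singleton univ univ_mem).choose_spec.2.2⟩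
          (fun n ih =>
            ⟨(hex (n+1) (ih.1.P + ih.1.w.rng) ih.2.P_add_rng_compact ih.1.T
                ih.2.T_mem).choose,
              (hex (n+1) (ih.1.P + ih.1.w.rng) ih.2.P_add_rng_compact ih.1.T
                ih.2.T_mem).choose_spec.2.2⟩) n
      refine ⟨fun n => (F n).1, fun n => (F n).2, ?_, ?_, ?_⟩
      · exact (hex 0 {0} isCompact_singleton univ univ_mem).choose_spec.1
      · exact fun n =>
          (hex (n+1) ((F n).1.P + (F n).1.w.rng) (F n).2.P_add_rng_compact (F n).1.T
            (F n).2.T_mem).choose_spec.1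
      · exact fun n =>
          (hex (n+1) ((F n).1.P + (F n).1.w.rng) (F n).2.P_add_rng_compact (F n).1.T
            (F n).2.T_mem).choose_spec.2.1
    -- set up instances for the test spaces
    letI : ∀ n, MetricSpace ((st n).w.K) := fun n => (st n).w.ms
    haveI hcs : ∀ n, CompactSpace ((st n).w.K) := fun n => (hgood n).2.2.2.1
    haveI hne : ∀ n, Nonempty ((st n).w.K) := fun n => (hgood n).2.2.2.2.1
    have hcont : ∀ n, Continuous ((st n).w.g) := fun n => (hgood n).2.2.2.2.2.1
    have hsmall : ∀ n k, (st n).w.g k ∈ (st n).T := fun n => (hgood n).2.2.2.2.2.2.1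
    have hmeag : ∀ (n : ℕ) (x : X), IsMeagre ((st n).w.g ⁻¹' {y | y - x ∈ B n}) :=
      fun n => (hgood n).2.2.2.2.2.2.2
    have hT0 : ∀ n, (0 : X) ∈ (st n).T := fun n => mem_of_mem_nhds (hgood n).2.1
    -- partial sums
    let S : ℕ → (∀ n, (st n).w.K) → X := fun N k =>
      ∑ j ∈ Finset.range N, (st j).w.g (k j)
    have hS_cont : ∀ N, Continuous (S N) := fun N =>
      continuous_finset_sum _ (fun j _ => (hcont j).comp (continuous_apply j))
    have hS_mem : ∀ m k, S m k ∈ (st m).P := by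
      intro m
      induction m with
      | zero => intro k; simp only [S, Finset.range_zero, Finset.sum_empty, hP0,
          mem_singleton_iff]
      | succ n ih =>
        intro k
        rw [hlinkP n]
        have h2 : (st n).w.g (k n) ∈ (st n).w.rng := Set.mem_range_self _
        have := Set.add_mem_add (ih k) h2
        simpa only [S, Finset.sum_range_succ] using this
    have htail : ∀ (L m : ℕ) (k : ∀ n, (st n).w.K),
        (∑ j ∈ Finset.Ico (m+1) (m+1+L), (st j).w.g (k j)) ∈ (st m).T := by
      intro L
      induction L with
      | zero => intro m k; simpa using hT0 m
      | succ L ih =>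
        intro m k
        have h1 : m + 1 < m + 1 + (L + 1) := by omega
        rw [Finset.sum_eq_sum_Ico_succ_bot h1]
        have h2 : m + 1 + (L + 1) = (m + 1) + 1 + L := by omega
        rw [h2]
        exact hlinkT m (Set.add_mem_add (hsmall (m+1) _) (ih (m+1) k))
    have hdist : ∀ (m N : ℕ) (k : ∀ n, (st n).w.K), m ≤ N →
        dist (S N k) (S m k) < (1/2 : ℝ)^m := by
      intro m N k hmN
      rcases eq_or_lt_of_le hmN with rfl | h
      · simpa using (pow_pos (by norm_num : (0:ℝ) < 1/2) m)
      · have hsplit : S N k = S m k + ∑ j ∈ Finset.Ico m N, (st j).w.g (k j) :=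
          (Finset.sum_range_add_sum_Ico _ hmN).symm
        have htailm : (∑ j ∈ Finset.Ico m N, (st j).w.g (k j)) ∈ (st m).T + (st m).T := by
          rw [Finset.sum_eq_sum_Ico_succ_bot h]
          have hN : N = m + 1 + (N - (m+1)) := by omega
          have h3 := htail (N - (m+1)) m k
          rw [← hN] at h3
          exact Set.add_mem_add (hsmall m (k m)) h3
        rw [hsplit]
        exact (hgood m).2.2.1 _ (hS_mem m k) _ htailm
    -- pass to the limit
    have hcauchy : ∀ k, CauchySeq (fun N => S N k) := by
      intro k
      apply cauchySeq_of_le_geometric (1/2 : ℝ) 1 (by norm_num)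
      intro n
      rw [dist_comm, one_mul]
      exact le_of_lt (hdist n (n+1) k (by omega))
    have hlim : ∀ k, ∃ l, Filter.Tendsto (fun N => S N k) Filter.atTop (𝓝 l) :=
      fun k => cauchySeq_tendsto_of_complete (hcauchy k)
    choose f hf using hlim
    have hfd : ∀ (m : ℕ) k, dist (f k) (S m k) ≤ (1/2 : ℝ)^m := by
      intro m k
      have h1 : Filter.Tendsto (fun N => dist (S N k) (S m k)) Filter.atTop
          (𝓝 (dist (f k) (S m k))) := (hf k).dist tendsto_const_nhds
      apply le_of_tendsto h1
      filter_upwards [Filter.eventually_ge_atTop m] with N hN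
      exact le_of_lt (hdist m N k hN)
    have hunif : TendstoUniformly (fun N k => S N k) f Filter.atTop := by
      rw [Metric.tendstoUniformly_iff]
      intro ε hε
      obtain ⟨m, hm⟩ := exists_pow_lt_of_lt_one hε (by norm_num : (1/2:ℝ) < 1)
      filter_upwards [Filter.eventually_ge_atTop m] with N hN k
      calc dist (f k) (S N k) ≤ (1/2 : ℝ)^N := hfd N k
        _ ≤ (1/2 : ℝ)^m := pow_le_pow_of_le_one (by norm_num) (by norm_num) hN
        _ < ε := hm
    have hfc : Continuous f := hunif.continuous (Filter.Eventually.of_forall hS_cont).frequently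
    -- per-n meagerness via Kuratowski–Ulam
    have hmain : ∀ (n : ℕ) (x : X), IsMeagre (f ⁻¹' {y | y - x ∈ B n}) := by
      intro n x
      classical
      let e := Homeomorph.piSplitAt (ι := ℕ) n (fun j => (st j).w.K)
      let a₀ : (st n).w.K := Classical.arbitrary _
      let h : (∀ j : {j : ℕ // j ≠ n}, (st j).w.K) → X :=
        fun y => f (e.symm (a₀, y)) - (st n).w.g a₀
      have hh : Continuous h :=
        ((hfc.comp (e.symm.continuous.comp (Continuous.prodMk_right a₀))).sub continuous_const)
      have hcoordn : ∀ (a : (st n).w.K) (y : ∀ j : {j : ℕ // j ≠ n}, (st j).w.K),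
          (e.symm (a, y)) n = a := by
        intro a y
        simp [e, Homeomorph.piSplitAt, Equiv.piSplitAt]
      have hcoord : ∀ (a : (st n).w.K) (y : ∀ j : {j : ℕ // j ≠ n}, (st j).w.K)
          (j : ℕ) (hj : j ≠ n), (e.symm (a, y)) j = y ⟨j, hj⟩ := by
        intro a y j hj
        simp [e, Homeomorph.piSplitAt, Equiv.piSplitAt, hj]
      have hkey : ∀ (a : (st n).w.K) (y : ∀ j : {j : ℕ // j ≠ n}, (st j).w.K),
          f (e.symm (a, y)) = (st n).w.g a + h y := by
        intro a y
        have heq : ∀ N, n < N → S N (e.symm (a, y)) - (st n).w.g a =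
            S N (e.symm (a₀, y)) - (st n).w.g a₀ := by
          intro N hN
          have hmem : n ∈ Finset.range N := Finset.mem_range.2 hN
          have h1 : ∀ (a : (st n).w.K), S N (e.symm (a, y)) - (st n).w.g a =
              ∑ j ∈ (Finset.range N).erase n, (st j).w.g ((e.symm (a, y)) j) := by
            intro a
            rw [sub_eq_iff_eq_add]
            rw [show S N (e.symm (a, y)) =
              ∑ j ∈ Finset.range N, (st j).w.g ((e.symm (a, y)) j) from rfl]
            rw [← Finset.sum_erase_add _ _ hmem, hcoordn a y]
          rw [h1 a, h1 a₀]
          apply Finset.sum_congr rfl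
          intro j hj
          have hjn : j ≠ n := Finset.ne_of_mem_erase hj
          rw [hcoord a y j hjn, hcoord a₀ y j hjn]
        have t1 : Filter.Tendsto (fun N => S N (e.symm (a, y)) - (st n).w.g a)
            Filter.atTop (𝓝 (f (e.symm (a, y)) - (st n).w.g a)) :=
          (hf _).sub_const _
        have t2 : Filter.Tendsto (fun N => S N (e.symm (a, y)) - (st n).w.g a)
            Filter.atTop (𝓝 (f (e.symm (a₀, y)) - (st n).w.g a₀)) := by
          refine ((hf _).sub_const _).congr' ?_
          filter_upwards [Filter.eventually_gt_atTop n] with N hN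
          exact (heq N hN).symm
        have := tendsto_nhds_unique t1 t2
        rw [sub_eq_iff_eq_add'] at this
        exact this
      set Sset : Set ((st n).w.K × ∀ j : {j : ℕ // j ≠ n}, (st j).w.K) :=
        {p | (st n).w.g p.1 + h p.2 - x ∈ B n} with hSset
      have hSsetBM : BaireMeasurableSet Sset := by
        borelize ((st n).w.K × ∀ j : {j : ℕ // j ≠ n}, (st j).w.K)
        have hFc : Continuous (fun p : (st n).w.K × ∀ j : {j : ℕ // j ≠ n}, (st j).w.K =>
            (st n).w.g p.1 + h p.2 - x) :=
          (((hcont n).comp continuous_fst).add (hh.comp continuous_snd)).sub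
            continuous_const
        exact ((hBor n).preimage hFc.measurable).baireMeasurableSet
      have hsec : ∀ y, IsMeagre ((fun a => (a, y)) ⁻¹' Sset) := by
        intro y
        have heq2 : (fun a => (a, y)) ⁻¹' Sset =
            (st n).w.g ⁻¹' {z | z - (x - h y) ∈ B n} := by
          ext a
          simp only [Sset, mem_preimage, mem_setOf_eq]
          have : (st n).w.g a + h y - x = (st n).w.g a - (x - h y) := by abel
          rw [this]
        rw [heq2]
        exact hmeag n (x - h y)
      have hSm : IsMeagre Sset := isMeagre_of_sections_meagre hSsetBM hsec
      have himg : f ⁻¹' {y | y - x ∈ B n} = ⇑e ⁻¹' Sset := by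
        ext k
        simp only [mem_preimage, mem_setOf_eq, Sset]
        have h2 := hkey (e k).1 (e k).2
        rw [show (((e k).1, (e k).2) : _ × _) = e k from rfl, e.symm_apply_apply] at h2
        rw [h2]
      rw [himg]
      exact hSm.preimage_of_isOpenMap e.continuous e.isOpenMap
    -- assemble the witness for the union
    haveI : MetrizableSpace (∀ n, (st n).w.K) := inferInstance
    letI : MetricSpace (∀ n, (st n).w.K) := TopologicalSpace.metrizableSpaceMetric _
    refine ⟨⋃ n, B n, Set.iUnion_mono hsub, MeasurableSet.iUnion hBor,
      (∀ n, (st n).w.K), inferInstance, inferInstance, inferInstance, f, hfc, ?_⟩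
    intro x
    have hsplit : f ⁻¹' {y | y - x ∈ ⋃ n, B n} = ⋃ n, f ⁻¹' {y | y - x ∈ B n} := by
      ext k
      simp [mem_iUnion]
    rw [hsplit]
    exact isMeagre_iUnion (fun n => hmain n x)
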